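/- (Slant helix position vector) Let κ be C¹ and positive and m ≠ 0 a constant, and define α(s) = (x(s),y(s),z(s)) by x(s) = (1/√(1+m²))∫(∫ sin[(√(1+m²)/m)·arccos(m∫₀ˢκ)]·κ(s) ds) ds, y(s) = (1/√(1+m²))∫(∫ cos[(√(1+m²)/m)·arccos(m∫₀ˢκ)]·κ(s) ds) ds, z(s) = (|m|/√(1+m²))∫(∫₀ˢκ) ds, on an interval where |m∫₀ˢκ| < 1/√(1+m²). Then α is a unit-speed curve whose principal normal satisfies ⟨n(s),(0,0,1)⟩ = |m|/√(1+m²); i.e., α is a slant helix. -/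

import Mathlib

open Real
open scoped RealInnerProductSpace

lemma antideriv_on {I : Set ℝ} (hI : IsOpen I) (hIc : I.OrdConnected) {a : ℝ} (ha : a ∈ I)
    {f : ℝ → ℝ} (hf : ContinuousOn f I) {s : ℝ} (hs : s ∈ I) :
    HasDerivAt (fun t => ∫ u in a..t, f u) (f s) s :=
  intervalIntegral.integral_hasDerivAt_right
    ((hf.mono (hIc.uIcc_subset ha hs)).intervalIntegrable)
    (hf.stronglyMeasurableAtFilter hI s hs)
    (hf.continuousAt (hI.mem_nhds hs))

lemma triple_hasDerivAt {x y z : ℝ → ℝ} {x' y' z' s : ℝ} (hx : HasDerivAt x x' s)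
    (hy : HasDerivAt y y' s) (hz : HasDerivAt z z' s) :
    HasDerivAt (fun s => ((WithLp.equiv 2 (Fin 3 → ℝ)).symm ![x s, y s, z s] :
      EuclideanSpace ℝ (Fin 3)))
      ((WithLp.equiv 2 (Fin 3 → ℝ)).symm ![x', y', z']) s := by
  have hvec : HasDerivAt (fun s => ![x s, y s, z s]) ![x', y', z'] s := by
    apply hasDerivAt_pi.2
    intro i
    fin_cases i
    · simpa using hx
    · simpa using hy
    · simpa using hz
  have := ((PiLp.continuousLinearEquiv 2 ℝ (fun _ : Fin 3 => ℝ)).symm :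
      (Fin 3 → ℝ) →L[ℝ] EuclideanSpace ℝ (Fin 3)).hasFDerivAt.comp_hasDerivAt s hvec
  exact this

lemma triple_norm (a b c : ℝ) :
    ‖((WithLp.equiv 2 (Fin 3 → ℝ)).symm ![a,b,c] : EuclideanSpace ℝ (Fin 3))‖
    = Real.sqrt (a ^ 2 + b ^ 2 + c ^ 2) := by
  simp [EuclideanSpace.norm_eq, Fin.sum_univ_three]

lemma triple_inner (a b c d e f : ℝ) :
    (⟪((WithLp.equiv 2 (Fin 3 → ℝ)).symm ![a,b,c] : EuclideanSpace ℝ (Fin 3)),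
      ((WithLp.equiv 2 (Fin 3 → ℝ)).symm ![d,e,f] : EuclideanSpace ℝ (Fin 3))⟫)
    = a * d + b * e + c * f := by
  simp [PiLp.inner_apply, Fin.sum_univ_three]
  ring

/-- Slant helix position vector: with
`x = (1/√(1+m²))∫(∫ sin[(√(1+m²)/m)arccos(m∫₀ˢκ)]κ)`,
`y = (1/√(1+m²))∫(∫ cos[(√(1+m²)/m)arccos(m∫₀ˢκ)]κ)`,
`z = (|m|/√(1+m²))∫(∫₀ˢκ)` (for suitable antiderivatives), the curve `α = (x,y,z)` is unit
speed and its principal normal `n = α''/|α''|` satisfies `⟨n,(0,0,1)⟩ = |m|/√(1+m²)`: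
`α` is a slant helix. -/
theorem slant_helix_position_vector
    (I : Set ℝ) (hI : IsOpen I) (hIc : I.OrdConnected) (h0 : (0 : ℝ) ∈ I)
    (κ : ℝ → ℝ) (hκ : ContDiffOn ℝ 1 κ I) (hκpos : ∀ s ∈ I, 0 < κ s)
    (m : ℝ) (hm : m ≠ 0)
    (K : ℝ → ℝ) (hK : K = fun s => ∫ u in (0 : ℝ)..s, κ u)
    (hdom : ∀ s ∈ I, |m * K s| < 1 / Real.sqrt (1 + m ^ 2)) :
    ∃ P Q x y z : ℝ → ℝ,
      (∀ s ∈ I, HasDerivAt P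
        (Real.sin (Real.sqrt (1 + m ^ 2) / m * Real.arccos (m * K s)) * κ s) s) ∧
      (∀ s ∈ I, HasDerivAt Q
        (Real.cos (Real.sqrt (1 + m ^ 2) / m * Real.arccos (m * K s)) * κ s) s) ∧
      (∀ s ∈ I, HasDerivAt x (1 / Real.sqrt (1 + m ^ 2) * P s) s) ∧
      (∀ s ∈ I, HasDerivAt y (1 / Real.sqrt (1 + m ^ 2) * Q s) s) ∧
      (∀ s ∈ I, HasDerivAt z (|m| / Real.sqrt (1 + m ^ 2) * K s) s) ∧
      ∀ α : ℝ → EuclideanSpace ℝ (Fin 3),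
        α = (fun s => (WithLp.equiv 2 (Fin 3 → ℝ)).symm ![x s, y s, z s]) →
        ∀ s ∈ I, ‖deriv α s‖ = 1 ∧
          ⟪(‖deriv (deriv α) s‖)⁻¹ • deriv (deriv α) s,
            ((WithLp.equiv 2 (Fin 3 → ℝ)).symm ![0, 0, 1] : EuclideanSpace ℝ (Fin 3))⟫ =
          |m| / Real.sqrt (1 + m ^ 2) := by
  set c : ℝ := Real.sqrt (1 + m ^ 2) with hc
  have hc2 : c ^ 2 = 1 + m ^ 2 := Real.sq_sqrt (by positivity)
  have hc1 : 1 ≤ c := by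
    rw [hc]; nlinarith [Real.sq_sqrt (show (0:ℝ) ≤ 1 + m^2 by positivity),
      Real.sqrt_nonneg (1+m^2)]
  have hcpos : 0 < c := lt_of_lt_of_le one_pos hc1
  have hKd : ∀ s ∈ I, HasDerivAt K (κ s) s := by
    intro s hs
    rw [hK]
    exact antideriv_on hI hIc h0 hκ.continuousOn hs
  set θ : ℝ → ℝ := fun s => c / m * Real.arccos (m * K s) with hθ
  set R : ℝ → ℝ := fun s => Real.sqrt (1 - (m * K s) ^ 2) with hR
  have hwlt : ∀ s ∈ I, |m * K s| < 1 := fun s hs =>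
    lt_of_lt_of_le (hdom s hs) (by rw [div_le_one hcpos]; exact hc1)
  have h1w : ∀ s ∈ I, 0 < 1 - (m * K s) ^ 2 := by
    intro s hs
    have := abs_lt.1 (hwlt s hs)
    nlinarith [this.1, this.2]
  have hRpos : ∀ s ∈ I, 0 < R s := fun s hs => Real.sqrt_pos.2 (h1w s hs)
  have hR2 : ∀ s ∈ I, R s ^ 2 = 1 - (m * K s) ^ 2 := fun s hs => Real.sq_sqrt (h1w s hs).le
  have hθd : ∀ s ∈ I, HasDerivAt θ (-(c * κ s) / R s) s := by
    intro s hs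
    have h1 : m * K s ≠ 1 := by intro h; simpa [h] using hwlt s hs
    have h2 : m * K s ≠ -1 := by intro h; simpa [h] using hwlt s hs
    have := ((Real.hasDerivAt_arccos h2 h1).comp s ((hKd s hs).const_mul m)).const_mul (c / m)
    refine this.congr_deriv (Eq.symm ?_)
    have hrne := (hRpos s hs).ne'
    rw [hR] at hrne ⊢
    field_simp [hrne]
  have hRd : ∀ s ∈ I, HasDerivAt R (-(m * K s) * (m * κ s) / R s) s := by
    intro s hs
    have hinner : HasDerivAt (fun s => 1 - (m * K s) ^ 2)
        (-(2 * (m * K s) * (m * κ s))) s := by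
      have := (((hKd s hs).const_mul m).pow 2).const_sub 1
      refine this.congr_deriv (Eq.symm ?_)
      ring
    have := (Real.hasDerivAt_sqrt (h1w s hs).ne').comp s hinner
    refine this.congr_deriv (Eq.symm ?_)
    rw [hR]
    field_simp
  set P : ℝ → ℝ := fun s => c * R s * Real.cos (θ s) - m ^ 2 * K s * Real.sin (θ s) with hP
  set Q : ℝ → ℝ := fun s => -(c * R s * Real.sin (θ s)) - m ^ 2 * K s * Real.cos (θ s) with hQ
  have hPd : ∀ s ∈ I, HasDerivAt P (Real.sin (θ s) * κ s) s := by
    intro s hs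
    have h := (((hRd s hs).const_mul c).mul ((hθd s hs).cos)).sub
      (((hKd s hs).const_mul (m ^ 2)).mul ((hθd s hs).sin))
    refine h.congr_deriv (Eq.symm ?_)
    have hr2 := hR2 s hs
    have hrne := (hRpos s hs).ne'
    field_simp
    linear_combination (Real.sin (θ s) * κ s * (1 - R s ^ 2 - R s - m ^ 2 * K s ^ 2)) * hc2
      + (Real.sin (θ s) * κ s * (c ^ 2 - 1 - m ^ 2)) * hr2
  have hQd : ∀ s ∈ I, HasDerivAt Q (Real.cos (θ s) * κ s) s := by
    intro s hs
    have h := (((hRd s hs).const_mul c).mul ((hθd s hs).sin)).neg.sub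
      (((hKd s hs).const_mul (m ^ 2)).mul ((hθd s hs).cos))
    refine h.congr_deriv (Eq.symm ?_)
    have hr2 := hR2 s hs
    have hrne := (hRpos s hs).ne'
    field_simp
    linear_combination (-(Real.cos (θ s) * κ s * R s)) * hc2
  have hKcont : ContinuousOn K I := fun s hs => ((hKd s hs).continuousAt).continuousWithinAt
  have hPcont : ContinuousOn P I := fun s hs => ((hPd s hs).continuousAt).continuousWithinAt
  have hQcont : ContinuousOn Q I := fun s hs => ((hQd s hs).continuousAt).continuousWithinAt
  set x : ℝ → ℝ := fun t => ∫ u in (0:ℝ)..t, 1 / c * P u with hx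
  set y : ℝ → ℝ := fun t => ∫ u in (0:ℝ)..t, 1 / c * Q u with hy
  set z : ℝ → ℝ := fun t => ∫ u in (0:ℝ)..t, |m| / c * K u with hz
  have hxd : ∀ s ∈ I, HasDerivAt x (1 / c * P s) s := fun s hs =>
    antideriv_on hI hIc h0 (continuousOn_const.mul hPcont) hs
  have hyd : ∀ s ∈ I, HasDerivAt y (1 / c * Q s) s := fun s hs =>
    antideriv_on hI hIc h0 (continuousOn_const.mul hQcont) hs
  have hzd : ∀ s ∈ I, HasDerivAt z (|m| / c * K s) s := fun s hs =>
    antideriv_on hI hIc h0 (continuousOn_const.mul hKcont) hs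
  refine ⟨P, Q, x, y, z, hPd, hQd, hxd, hyd, hzd, ?_⟩
  intro α hα s hs
  set v1 : ℝ → EuclideanSpace ℝ (Fin 3) := fun t =>
    (WithLp.equiv 2 (Fin 3 → ℝ)).symm ![1 / c * P t, 1 / c * Q t, |m| / c * K t] with hv1
  have hαd : ∀ t ∈ I, HasDerivAt α (v1 t) t := by
    intro t ht
    rw [hα]
    exact triple_hasDerivAt (hxd t ht) (hyd t ht) (hzd t ht)
  have hderiv_eq : ∀ t ∈ I, deriv α t = v1 t := fun t ht => (hαd t ht).deriv
  have hκs := hκpos s hs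
  have hr2 := hR2 s hs
  have hsc := Real.sin_sq_add_cos_sq (θ s)
  have habs : |m| ^ 2 = m ^ 2 := sq_abs m
  have key : P s ^ 2 + Q s ^ 2 + (|m| * K s) ^ 2 = c ^ 2 := by
    simp only [hP, hQ]
    linear_combination (c ^ 2 * R s ^ 2 + m ^ 4 * K s ^ 2) * hsc + K s ^ 2 * habs
      + c ^ 2 * hr2 - m ^ 2 * K s ^ 2 * hc2
  constructor
  · rw [hderiv_eq s hs, hv1, triple_norm]
    rw [show (1 / c * P s) ^ 2 + (1 / c * Q s) ^ 2 + (|m| / c * K s) ^ 2 = 1 by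
      field_simp
      linear_combination key]
    exact Real.sqrt_one
  · set v2 : EuclideanSpace ℝ (Fin 3) := (WithLp.equiv 2 (Fin 3 → ℝ)).symm
      ![1 / c * (Real.sin (θ s) * κ s), 1 / c * (Real.cos (θ s) * κ s), |m| / c * κ s] with hv2
    have hv1d : HasDerivAt v1 v2 s := by
      rw [hv1, hv2]
      exact triple_hasDerivAt ((hPd s hs).const_mul (1 / c)) ((hQd s hs).const_mul (1 / c))
        ((hKd s hs).const_mul (|m| / c))
    have hev : deriv α =ᶠ[nhds s] v1 :=
      Filter.eventuallyEq_of_mem (hI.mem_nhds hs) hderiv_eq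
    have hdd : deriv (deriv α) s = v2 := by
      rw [hev.deriv_eq]
      exact hv1d.deriv
    have hnorm : ‖v2‖ = κ s := by
      rw [hv2, triple_norm]
      rw [show (1 / c * (Real.sin (θ s) * κ s)) ^ 2 + (1 / c * (Real.cos (θ s) * κ s)) ^ 2
          + (|m| / c * κ s) ^ 2 = (κ s) ^ 2 by
        field_simp
        linear_combination hsc + habs - hc2]
      exact Real.sqrt_sq hκs.le
    rw [hdd, hnorm, real_inner_smul_left, hv2, triple_inner]
    field_simp
    ring
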